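/- Fix N ≥ 1 and d ≥ 1, and let μ be Lebesgue measure (volume) on the space Fin N → (Fin d → ℝ). Let D be a measurable fundamental domain (MeasureTheory.IsFundamentalDomain) for the action of S_N given by σ • x = x ∘ σ⁻¹. Let 𝒜 be the set of ψ ∈ L²(μ, ℂ) such that for every σ ∈ S_N, ψ(x ∘ σ) = (sign σ) • ψ(x) for μ-almost every x (the anti-symmetric subspace). Then 𝒜 is a closed linear subspace of L²(μ, ℂ), and the map sending ψ ∈ 𝒜 to √(N!) times the restriction of ψ to D (viewed as an element of L²(μ restricted to D, ℂ)) is a linear isometric bijection from 𝒜 onto L²(μ.restrict D, ℂ). -/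

import Mathlib

open MeasureTheory Pointwise

lemma measurePreserving_precomp (N d : ℕ) (σ : Equiv.Perm (Fin N)) :
    MeasurePreserving (fun x : Fin N → Fin d → ℝ => x ∘ ⇑σ) volume volume := by
  have h := MeasureTheory.volume_measurePreserving_piCongrLeft
    (fun _ : Fin N => Fin d → ℝ) σ⁻¹
  have heq : ⇑(MeasurableEquiv.piCongrLeft (fun _ : Fin N => Fin d → ℝ) σ⁻¹)
      = fun x : Fin N → Fin d → ℝ => x ∘ ⇑σ := by
    funext x
    funext i
    have := Equiv.piCongrLeft_apply_apply (P := fun _ : Fin N => Fin d → ℝ)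
      (e := (σ⁻¹ : Equiv.Perm (Fin N))) x (σ i)
    simp only [show σ⁻¹ (σ i) = i from σ.symm_apply_apply i] at this
    simpa [MeasurableEquiv.coe_piCongrLeft] using this
  rwa [heq] at h

lemma norm_sign_cast (N : ℕ) (σ : Equiv.Perm (Fin N)) :
    ‖((Equiv.Perm.sign σ : ℤ) : ℂ)‖ = 1 := by
  rcases Int.units_eq_one_or (Equiv.Perm.sign σ) with h | h <;> simp [h]

/-- The action of the symmetric group `S_N` on tuples: `σ • x = x ∘ σ⁻¹`. -/
instance permFunMulAction (N : ℕ) (X : Type*) : MulAction (Equiv.Perm (Fin N)) (Fin N → X) where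
  smul σ x := x ∘ ⇑σ⁻¹
  one_smul x := by
    funext i
    simp [HSMul.hSMul]
  mul_smul σ τ x := by
    funext i
    simp [HSMul.hSMul, mul_inv_rev, Equiv.Perm.mul_apply]

lemma permFun_smul_def (N : ℕ) (X : Type*) (σ : Equiv.Perm (Fin N)) (x : Fin N → X) :
    σ • x = x ∘ ⇑σ⁻¹ := rfl

instance permMeasurableSpace (N : ℕ) : MeasurableSpace (Equiv.Perm (Fin N)) := ⊤

instance permMeasurableSMul (N d : ℕ) :
    MeasurableSMul (Equiv.Perm (Fin N)) (Fin N → Fin d → ℝ) where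
  measurable_const_smul σ := (measurePreserving_precomp N d σ⁻¹).measurable
  measurable_smul_const _ := measurable_from_top

instance permSMulInvariant (N d : ℕ) :
    SMulInvariantMeasure (Equiv.Perm (Fin N)) (Fin N → Fin d → ℝ)
      (volume : Measure (Fin N → Fin d → ℝ)) where
  measure_preimage_smul σ s hs := by
    have := (measurePreserving_precomp N d σ⁻¹).measure_preimage hs.nullMeasurableSet
    simpa [permFun_smul_def] using this

/-- The restriction map `L²(μ) → L²(μ.restrict D)` as a linear map. -/
noncomputable def restrictL {α : Type*} [MeasurableSpace α] (μ : Measure α) (D : Set α) :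
    Lp ℂ 2 μ →ₗ[ℂ] Lp ℂ 2 (μ.restrict D) where
  toFun ψ := ((Lp.memLp ψ).restrict D).toLp ⇑ψ
  map_add' ψ φ := by
    apply Lp.ext
    have h1 := MemLp.coeFn_toLp ((Lp.memLp (ψ + φ)).restrict D)
    have h2 := MemLp.coeFn_toLp ((Lp.memLp ψ).restrict D)
    have h3 := MemLp.coeFn_toLp ((Lp.memLp φ).restrict D)
    have h4 := Lp.coeFn_add (((Lp.memLp ψ).restrict D).toLp ⇑ψ)
      (((Lp.memLp φ).restrict D).toLp ⇑φ)
    have h5 : ⇑(ψ + φ) =ᵐ[μ.restrict D] ⇑ψ + ⇑φ := (Lp.coeFn_add ψ φ).restrict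
    filter_upwards [h1, h2, h3, h4, h5] with x h1 h2 h3 h4 h5
    rw [h1, h5, h4, Pi.add_apply, Pi.add_apply, h2, h3]
  map_smul' a ψ := by
    simp only [RingHom.id_apply]
    apply Lp.ext
    have h1 := MemLp.coeFn_toLp ((Lp.memLp (a • ψ)).restrict D)
    have h2 := MemLp.coeFn_toLp ((Lp.memLp ψ).restrict D)
    have h4 := Lp.coeFn_smul a (((Lp.memLp ψ).restrict D).toLp ⇑ψ)
    have h5 : ⇑(a • ψ) =ᵐ[μ.restrict D] a • ⇑ψ := (Lp.coeFn_smul a ψ).restrict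
    filter_upwards [h1, h2, h4, h5] with x h1 h2 h4 h5
    rw [h1, h5, h4, Pi.smul_apply, Pi.smul_apply, h2]

set_option maxHeartbeats 1000000 in
/-- The anti-symmetric subspace `𝒜` of `L²(volume, ℂ)` over `Fin N → (Fin d → ℝ)` is a
closed linear subspace, and `ψ ↦ √(N!) · (ψ restricted to a fundamental domain D)` is a
linear isometric bijection from `𝒜` onto `L²(volume.restrict D, ℂ)`. -/
theorem stmt_11 (N d : ℕ) (hN : 1 ≤ N) (hd : 1 ≤ d)
    (D : Set (Fin N → Fin d → ℝ)) (hDmeas : MeasurableSet D)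
    (hDfd : IsFundamentalDomain (Equiv.Perm (Fin N)) D
      (volume : Measure (Fin N → Fin d → ℝ))) :
    ∃ A : Submodule ℂ (Lp ℂ 2 (volume : Measure (Fin N → Fin d → ℝ))),
      (A : Set (Lp ℂ 2 (volume : Measure (Fin N → Fin d → ℝ))))
        = {ψ : Lp ℂ 2 (volume : Measure (Fin N → Fin d → ℝ)) |
            ∀ σ : Equiv.Perm (Fin N), ∀ᵐ x ∂(volume : Measure (Fin N → Fin d → ℝ)),
              ψ (x ∘ ⇑σ) = ((Equiv.Perm.sign σ : ℤ) : ℂ) * ψ x} ∧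
      IsClosed (A : Set (Lp ℂ 2 (volume : Measure (Fin N → Fin d → ℝ)))) ∧
      ∃ e : A ≃ₗᵢ[ℂ] Lp ℂ 2 ((volume : Measure (Fin N → Fin d → ℝ)).restrict D),
        ∀ ψ : A, e ψ = ((Real.sqrt N.factorial : ℝ) : ℂ) •
          MemLp.toLp ⇑(ψ : Lp ℂ 2 (volume : Measure (Fin N → Fin d → ℝ)))
            ((Lp.memLp (ψ : Lp ℂ 2 (volume : Measure (Fin N → Fin d → ℝ)))).restrict D) := by
  set μ := (volume : Measure (Fin N → Fin d → ℝ)) with hμ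
  set sgn : Equiv.Perm (Fin N) → ℂ := fun σ => ((Equiv.Perm.sign σ : ℤ) : ℂ) with hsgn
  set T : Equiv.Perm (Fin N) → (Lp ℂ 2 μ →ₗ[ℂ] Lp ℂ 2 μ) := fun σ =>
    Lp.compMeasurePreservingₗ ℂ _ (measurePreserving_precomp N d σ) with hT
  have hT_coe : ∀ σ (ψ : Lp ℂ 2 μ), T σ ψ =ᵐ[μ] fun x => ψ (x ∘ ⇑σ) := fun σ ψ =>
    Lp.coeFn_compMeasurePreserving ψ (measurePreserving_precomp N d σ)
  set A : Submodule ℂ (Lp ℂ 2 μ) :=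
    ⨅ σ : Equiv.Perm (Fin N), LinearMap.ker (T σ - sgn σ • LinearMap.id) with hA
  have hmem : ∀ ψ : Lp ℂ 2 μ, ψ ∈ A ↔ ∀ σ, T σ ψ = sgn σ • ψ := by
    intro ψ
    simp [hA, Submodule.mem_iInf, LinearMap.mem_ker, sub_eq_zero]
  have hchar : ∀ ψ : Lp ℂ 2 μ, ψ ∈ A ↔
      ∀ σ : Equiv.Perm (Fin N), ∀ᵐ x ∂μ, ψ (x ∘ ⇑σ) = sgn σ * ψ x := by
    intro ψ
    rw [hmem]
    constructor
    · intro h σ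
      have h2 : (T σ ψ : _ → ℂ) =ᵐ[μ] ⇑(sgn σ • ψ) := by rw [h σ]
      filter_upwards [h2, hT_coe σ ψ, Lp.coeFn_smul (sgn σ) ψ] with x h2 h3 h4
      rw [← h3, h2, h4, Pi.smul_apply, smul_eq_mul]
    · intro h σ
      apply Lp.ext
      filter_upwards [h σ, hT_coe σ ψ, Lp.coeFn_smul (sgn σ) ψ] with x h1 h2 h3
      rw [h2, h1, h3, Pi.smul_apply, smul_eq_mul]
  have hAset : (A : Set (Lp ℂ 2 μ)) =
      {ψ : Lp ℂ 2 μ | ∀ σ : Equiv.Perm (Fin N), ∀ᵐ x ∂μ, ψ (x ∘ ⇑σ) = sgn σ * ψ x} := by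
    ext ψ; rw [SetLike.mem_coe, hchar]; rfl
  refine ⟨A, hAset, ?_, ?_⟩
  · have : (A : Set (Lp ℂ 2 μ)) = ⋂ σ : Equiv.Perm (Fin N),
        (fun ψ : Lp ℂ 2 μ => T σ ψ - sgn σ • ψ) ⁻¹' {0} := by
      ext ψ
      simp [SetLike.mem_coe, hmem ψ, sub_eq_zero]
    rw [this]
    refine isClosed_iInter fun σ => isClosed_singleton.preimage ?_
    exact ((Lp.isometry_compMeasurePreserving
      (measurePreserving_precomp N d σ)).continuous).sub (continuous_id.const_smul (sgn σ))
  · set c : ℝ := Real.sqrt N.factorial with hc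
    have hcpos : 0 < c := Real.sqrt_pos.2 (by exact_mod_cast N.factorial_pos)
    have hcC : ((c : ℂ)) ≠ 0 := by exact_mod_cast hcpos.ne'
    have hkey : ∀ ψ : Lp ℂ 2 μ, ψ ∈ A →
        ∫⁻ x, (‖ψ x‖₊ : ENNReal) ^ (2:ℝ) ∂μ
          = (N.factorial : ENNReal) * ∫⁻ x in D, (‖ψ x‖₊ : ENNReal) ^ (2:ℝ) ∂μ := by
      intro ψ hψ
      rw [hDfd.lintegral_eq_tsum'' (fun x => (‖ψ x‖₊ : ENNReal) ^ (2:ℝ))]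
      have hconst : ∀ σ : Equiv.Perm (Fin N),
          ∫⁻ x in D, (‖ψ (σ • x)‖₊ : ENNReal) ^ (2:ℝ) ∂μ
            = ∫⁻ x in D, (‖ψ x‖₊ : ENNReal) ^ (2:ℝ) ∂μ := by
        intro σ
        refine lintegral_congr_ae (ae_restrict_of_ae ?_)
        filter_upwards [(hchar ψ).1 hψ σ⁻¹] with x hx
        rw [permFun_smul_def, hx]
        congr 2
        rw [nnnorm_mul]
        have h1 : ‖sgn σ⁻¹‖₊ = 1 := by
          ext
          exact norm_sign_cast N σ⁻¹
        rw [h1, one_mul]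
      simp only [hconst]
      rw [tsum_fintype, Finset.sum_const, Finset.card_univ, Fintype.card_perm,
        Fintype.card_fin, nsmul_eq_mul]
    have hFnorm : ∀ (ψ : Lp ℂ 2 μ), ψ ∈ A →
        ‖((c : ℝ) : ℂ) • (((Lp.memLp ψ).restrict D).toLp ⇑ψ)‖ = ‖ψ‖ := by
      intro ψ hψ
      rw [norm_smul, Lp.norm_toLp, Lp.norm_def,
        eLpNorm_eq_lintegral_rpow_enorm_toReal (two_ne_zero) ENNReal.ofNat_ne_top,
        eLpNorm_eq_lintegral_rpow_enorm_toReal (two_ne_zero) ENNReal.ofNat_ne_top]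
      simp only [ENNReal.toReal_ofNat]
      rw [(show ∫⁻ x, ‖ψ x‖ₑ ^ (2:ℝ) ∂μ = (N.factorial : ENNReal) * ∫⁻ x in D, ‖ψ x‖ₑ ^ (2:ℝ) ∂μ from hkey ψ hψ), ENNReal.mul_rpow_of_nonneg _ _ (by norm_num : (0:ℝ) ≤ 1/2),
        ENNReal.toReal_mul, ← ENNReal.toReal_rpow, ← ENNReal.toReal_rpow, ENNReal.toReal_natCast]
      have h1 : ‖((c : ℝ) : ℂ)‖ = c := by
        rw [Complex.norm_real, Real.norm_eq_abs, abs_of_nonneg hcpos.le]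
      rw [h1, hc, Real.sqrt_eq_rpow]
    set F : A →ₗᵢ[ℂ] Lp ℂ 2 (μ.restrict D) :=
      { toLinearMap := ((c : ℂ) • restrictL μ D) ∘ₗ A.subtype
        norm_map' := fun ψ => by
          exact hFnorm (ψ : Lp ℂ 2 μ) ψ.2 } with hF
    have hFapply : ∀ ψ : A, F ψ = ((c : ℝ) : ℂ) •
        MemLp.toLp ⇑(ψ : Lp ℂ 2 μ) ((Lp.memLp (ψ : Lp ℂ 2 μ)).restrict D) := fun ψ => rfl
    have hsurj : Function.Surjective F := by
      intro φ
      set g : (Fin N → Fin d → ℝ) → ℂ := D.indicator ⇑φ with hg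
      have hgsm : StronglyMeasurable g := (Lp.stronglyMeasurable φ).indicator hDmeas
      have hgmem : MemLp g 2 μ := by
        refine ⟨hgsm.aestronglyMeasurable, ?_⟩
        rw [hg, eLpNorm_indicator_eq_eLpNorm_restrict hDmeas]
        exact (Lp.memLp φ).2
      set Ψ : (Fin N → Fin d → ℝ) → ℂ :=
        fun x => ∑ σ : Equiv.Perm (Fin N), sgn σ * g (x ∘ ⇑σ⁻¹) with hΨ
      have hΨmem : MemLp Ψ 2 μ := by
        rw [hΨ]
        exact memLp_finset_sum _ fun σ _ =>
          (hgmem.comp_measurePreserving (measurePreserving_precomp N d σ⁻¹)).const_mul _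
      have hanti : ∀ (τ : Equiv.Perm (Fin N)) (x), Ψ (x ∘ ⇑τ) = sgn τ * Ψ x := by
        intro τ x
        rw [hΨ]
        simp only
        rw [Finset.mul_sum]
        refine (Fintype.sum_equiv (Equiv.mulRight τ)
          (fun ρ => sgn τ * (sgn ρ * g (x ∘ ⇑ρ⁻¹)))
          (fun σ => sgn σ * g ((x ∘ ⇑τ) ∘ ⇑σ⁻¹)) ?_).symm
        intro ρ
        show sgn τ * (sgn ρ * g (x ∘ ⇑ρ⁻¹))
          = sgn ((Equiv.mulRight τ) ρ) * g ((x ∘ ⇑τ) ∘ ⇑((Equiv.mulRight τ) ρ)⁻¹)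
        have hco : (x ∘ ⇑τ) ∘ ⇑((Equiv.mulRight τ) ρ)⁻¹ = x ∘ ⇑ρ⁻¹ := by
          funext i
          simp [Equiv.Perm.mul_apply, mul_inv_rev]
        rw [hco]
        have hs : sgn ((Equiv.mulRight τ) ρ) = sgn ρ * sgn τ := by
          simp only [hsgn, Equiv.coe_mulRight, map_mul]
          push_cast
          ring
        rw [hs]
        ring
      set ψL : Lp ℂ 2 μ := hΨmem.toLp Ψ with hψL
      set ψA : Lp ℂ 2 μ := ((c : ℝ) : ℂ)⁻¹ • ψL with hψA
      have hψA_coe : ⇑ψA =ᵐ[μ] fun x => ((c : ℝ) : ℂ)⁻¹ * Ψ x := by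
        rw [hψA, hψL]
        filter_upwards [Lp.coeFn_smul (((c : ℝ) : ℂ))⁻¹ (hΨmem.toLp Ψ),
          hΨmem.coeFn_toLp] with x h1 h2
        rw [h1, Pi.smul_apply, smul_eq_mul, h2]
      have hψA_mem : ψA ∈ A := by
        rw [hchar]
        intro σ
        have h1 := (measurePreserving_precomp N d σ).quasiMeasurePreserving.ae_eq_comp hψA_coe
        filter_upwards [hψA_coe, h1] with x h0 h1x
        simp only [Function.comp_apply] at h1x
        rw [h1x, hanti σ x, h0]
        ring
      refine ⟨⟨ψA, hψA_mem⟩, ?_⟩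
      rw [hFapply]
      have hcoe : ((⟨ψA, hψA_mem⟩ : A) : Lp ℂ 2 μ) = ψA := rfl
      apply Lp.ext
      have hzero : ∀ σ : Equiv.Perm (Fin N), σ ≠ 1 →
          ∀ᵐ x ∂(μ.restrict D), x ∘ ⇑σ⁻¹ ∉ D := by
        intro σ hσ
        have hmeas0 : (μ.restrict D) {x | x ∘ ⇑σ⁻¹ ∈ D} = 0 := by
          rw [Measure.restrict_apply' hDmeas]
          have hd := hDfd.aedisjoint
            (show σ⁻¹ ≠ (1 : Equiv.Perm (Fin N)) by simpa using hσ)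
          have hseteq : {x : Fin N → Fin d → ℝ | x ∘ ⇑σ⁻¹ ∈ D} ∩ D
              = (σ⁻¹ • D) ∩ (1 : Equiv.Perm (Fin N)) • D := by
            rw [one_smul]
            congr 1
            ext x
            rw [Set.mem_setOf_eq, Set.mem_inv_smul_set_iff, permFun_smul_def]
          rw [hseteq]
          exact hd
        rw [ae_iff]
        simpa only [not_not] using hmeas0
      have hD_ae : ∀ᵐ x ∂(μ.restrict D), Ψ x = φ x := by
        have hall : ∀ᵐ x ∂(μ.restrict D),
            ∀ σ : Equiv.Perm (Fin N), σ ≠ 1 → x ∘ ⇑σ⁻¹ ∉ D := by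
          rw [ae_all_iff]
          intro σ
          by_cases hσ : σ = 1
          · filter_upwards with x h
            exact absurd hσ h
          · filter_upwards [hzero σ hσ] with x hx _
            exact hx
        filter_upwards [hall, ae_restrict_mem hDmeas] with x hx hxD
        rw [hΨ]
        simp only
        rw [Finset.sum_eq_single 1]
        · simp [hsgn, hg, Set.indicator_of_mem hxD]
        · intro σ _ hσ
          rw [hg, Set.indicator_of_notMem (hx σ hσ), mul_zero]
        · intro h
          exact absurd (Finset.mem_univ 1) h
      simp only [hcoe]
      filter_upwards [Lp.coeFn_smul (((c : ℝ) : ℂ))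
          (((Lp.memLp ψA).restrict D).toLp ⇑ψA),
        MemLp.coeFn_toLp ((Lp.memLp ψA).restrict D),
        hψA_coe.restrict, hD_ae] with x h1 h2 h3 h4
      rw [h1, Pi.smul_apply, h2, h3, ← h4, smul_eq_mul, ← mul_assoc,
        mul_inv_cancel₀ hcC, one_mul]
    refine ⟨LinearIsometryEquiv.ofSurjective F hsurj, fun ψ => ?_⟩
    rw [show (LinearIsometryEquiv.ofSurjective F hsurj) ψ = F ψ from
      congrFun (LinearIsometryEquiv.coe_ofSurjective F hsurj) ψ, hFapply]
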